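/- arXiv:0710.3792 — 5 statements merged into one kernel-verified Lean document; each statement's English description precedes it below -/
import Mathlib

section
/- Let (X,μ) be a connected weighted graph with bounded row sums, and let {X_n} be a sequence of finite subsets of X with X_n ⊆ X_{n+1} and ⋃_{n} X_n = X, such that each restricted weighted graph (X_n, ₙμ) (ₙμ being the restriction of μ to X_n × X_n) is connected. Then the convergence parameters ₙR := 1/limsup_{k→∞}(ₙμ^{(k)}(x,y))^{1/k} decrease to R_μ as n → ∞, that is, lim_{n→∞} ₙR = inf_n ₙR = R_μ. -/
open Filter MeasureTheory ProbabilityTheory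
open scoped ENNReal NNReal

/-- `n`-step weights (matrix powers) of a weight kernel `μ` on a countable set. -/
noncomputable def matPow {X : Type*} [DecidableEq X] (μ : X → X → ℝ≥0∞) :
    ℕ → X → X → ℝ≥0∞
  | 0, x, y => if x = y then 1 else 0
  | n + 1, x, y => ∑' z, matPow μ n x z * μ z y

/-- `(X, μ)` has bounded row sums. -/
def bddRows {X : Type*} (μ : X → X → ℝ≥0∞) : Prop :=
  ∃ K : ℝ≥0∞, K ≠ ⊤ ∧ ∀ x, ∑' y, μ x y ≤ K

/-- `(X, μ)` is connected. -/
def connectedW {X : Type*} [DecidableEq X] (μ : X → X → ℝ≥0∞) : Prop :=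
  ∀ x y, ∃ n, 0 < n ∧ 0 < matPow μ n x y

/-- `limsup_n (μ^{(n)}(x,y))^{1/n}`, the reciprocal of the convergence parameter. -/
noncomputable def lsRoot {X : Type*} [DecidableEq X] (μ : X → X → ℝ≥0∞) (x y : X) : ℝ≥0∞ :=
  Filter.limsup (fun n : ℕ => matPow μ n x y ^ (n : ℝ)⁻¹) Filter.atTop

/-- The convergence parameter `R = 1 / limsup_n (μ^{(n)}(x,y))^{1/n}`. -/
noncomputable def convR {X : Type*} [DecidableEq X] (μ : X → X → ℝ≥0∞) (x y : X) : ℝ≥0∞ :=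
  (lsRoot μ x y)⁻¹

open Classical in
/-- Restriction of a weight kernel to a subset (extended by `0`). -/
noncomputable def restrictW {X : Type*} (μ : X → X → ℝ≥0∞) (A : Set X) : X → X → ℝ≥0∞ :=
  fun x y => if x ∈ A ∧ y ∈ A then μ x y else 0
namespace TruncAux

variable {X : Type*} [DecidableEq X]

lemma matPow_zero (μ : X → X → ℝ≥0∞) (x y : X) :
    matPow μ 0 x y = if x = y then 1 else 0 := rfl

lemma matPow_succ (μ : X → X → ℝ≥0∞) (k : ℕ) (x y : X) :
    matPow μ (k + 1) x y = ∑' z, matPow μ k x z * μ z y := rfl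

lemma matPow_add (μ : X → X → ℝ≥0∞) (k l : ℕ) (x y : X) :
    matPow μ (k + l) x y = ∑' z, matPow μ k x z * matPow μ l z y := by
  induction l generalizing y with
  | zero =>
      simp only [Nat.add_zero, matPow_zero, mul_ite, mul_one, mul_zero]
      rw [tsum_eq_single y (fun b hb => by simp [hb])]
      simp
  | succ l ih =>
      rw [show k + (l + 1) = (k + l) + 1 from rfl]
      simp only [matPow_succ, ih]
      calc ∑' w, (∑' z, matPow μ k x z * matPow μ l z w) * μ w y
          = ∑' w, ∑' z, matPow μ k x z * matPow μ l z w * μ w y := by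
            simp only [← ENNReal.tsum_mul_right]
        _ = ∑' z, ∑' w, matPow μ k x z * matPow μ l z w * μ w y := ENNReal.tsum_comm
        _ = ∑' z, matPow μ k x z * ∑' w, matPow μ l z w * μ w y := by
            simp only [mul_assoc, ENNReal.tsum_mul_left]

lemma le_matPow_add (μ : X → X → ℝ≥0∞) (k l : ℕ) (x z y : X) :
    matPow μ k x z * matPow μ l z y ≤ matPow μ (k + l) x y := by
  rw [matPow_add]
  exact ENNReal.le_tsum z

lemma matPow_mono {μ ν : X → X → ℝ≥0∞} (h : ∀ a b, μ a b ≤ ν a b) :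
    ∀ k x y, matPow μ k x y ≤ matPow ν k x y := by
  intro k
  induction k with
  | zero => intro x y; simp [matPow_zero]
  | succ k ih =>
      intro x y
      rw [matPow_succ, matPow_succ]
      exact ENNReal.tsum_le_tsum fun z => mul_le_mul' (ih x z) (h z y)

lemma matPow_row_le {μ : X → X → ℝ≥0∞} {K : ℝ≥0∞} (hK : ∀ a, ∑' b, μ a b ≤ K) :
    ∀ k x, ∑' y, matPow μ k x y ≤ K ^ k := by
  intro k
  induction k with
  | zero =>
      intro x
      rw [show (fun y => matPow μ 0 x y) = fun y => if x = y then 1 else 0 from rfl,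
        tsum_eq_single x (fun b hb => if_neg (Ne.symm hb))]
      simp
  | succ k ih =>
      intro x
      rw [show ∑' y, matPow μ (k+1) x y = ∑' y, ∑' z, matPow μ k x z * μ z y from rfl,
        ENNReal.tsum_comm]
      calc ∑' z, ∑' y, matPow μ k x z * μ z y = ∑' z, matPow μ k x z * ∑' y, μ z y := by
            simp [ENNReal.tsum_mul_left]
        _ ≤ ∑' z, matPow μ k x z * K := ENNReal.tsum_le_tsum fun z => mul_le_mul' le_rfl (hK z)
        _ = (∑' z, matPow μ k x z) * K := ENNReal.tsum_mul_right
        _ ≤ K ^ k * K := mul_le_mul' (ih x) le_rfl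
        _ = K ^ (k + 1) := (pow_succ K k).symm

lemma matPow_le {μ : X → X → ℝ≥0∞} {K : ℝ≥0∞} (hK : ∀ a, ∑' b, μ a b ≤ K)
    (k : ℕ) (x y : X) : matPow μ k x y ≤ K ^ k :=
  le_trans (ENNReal.le_tsum y) (matPow_row_le hK k x)

lemma matPow_ne_top {μ : X → X → ℝ≥0∞} {K : ℝ≥0∞} (hK : ∀ a, ∑' b, μ a b ≤ K)
    (hKt : K ≠ ⊤) (k : ℕ) (x y : X) : matPow μ k x y ≠ ⊤ :=
  ne_top_of_le_ne_top (ENNReal.pow_ne_top hKt) (matPow_le hK k x y)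

lemma pow_le_matPow_mul (μ : X → X → ℝ≥0∞) (k : ℕ) (x : X) :
    ∀ m, (matPow μ k x x) ^ m ≤ matPow μ (m * k) x x := by
  intro m
  induction m with
  | zero => simp [matPow_zero]
  | succ m ih =>
      calc matPow μ k x x ^ (m + 1) = matPow μ k x x ^ m * matPow μ k x x := pow_succ _ _
        _ ≤ matPow μ (m * k) x x * matPow μ k x x := mul_le_mul' ih le_rfl
        _ ≤ matPow μ (m * k + k) x x := le_matPow_add μ (m * k) k x x x
        _ = matPow μ ((m + 1) * k) x x := by ring_nf


lemma tendsto_rpow_exp {x : ℝ≥0∞} (h0 : x ≠ 0) (ht : x ≠ ⊤) {r : ℕ → ℝ} {r0 : ℝ}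
    (hr : Tendsto r atTop (nhds r0)) :
    Tendsto (fun m => x ^ r m) atTop (nhds (x ^ r0)) := by
  have hx : 0 < x.toReal := ENNReal.toReal_pos h0 ht
  have hxe : ∀ t : ℝ, x ^ t = ENNReal.ofReal (x.toReal ^ t) := fun t => by
    rw [← ENNReal.ofReal_rpow_of_pos hx, ENNReal.ofReal_toReal ht]
  simp only [hxe]
  exact (ENNReal.continuous_ofReal.tendsto _).comp
    ((Real.continuousAt_const_rpow hx.ne').tendsto.comp hr)

lemma limsup_comp_le (b : ℕ → ℝ≥0∞) (φ : ℕ → ℕ) (hφ : Tendsto φ atTop atTop) :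
    limsup (b ∘ φ) atTop ≤ limsup b atTop := by
  have h : limsup (b ∘ φ) atTop = limsup b (Filter.map φ atTop) := by
    rw [Filter.limsup, Filter.limsup, Filter.map_map]
  rw [h]
  exact limsup_le_limsup_of_le hφ

lemma rpow_iSup {f : ℕ → ℝ≥0∞} (hf : Monotone f) {t : ℝ} (ht : 0 ≤ t) :
    (⨆ n, f n) ^ t = ⨆ n, f n ^ t := by
  have h1 : Tendsto (fun n => f n ^ t) atTop (nhds ((⨆ n, f n) ^ t)) :=
    (ENNReal.continuous_rpow_const.tendsto _).comp (tendsto_atTop_iSup hf)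
  have h2 : Tendsto (fun n => f n ^ t) atTop (nhds (⨆ n, f n ^ t)) :=
    tendsto_atTop_iSup (fun i j h => ENNReal.rpow_le_rpow (hf h) ht)
  exact tendsto_nhds_unique h1 h2

lemma iSup_mul_iSup_mono {f g : ℕ → ℝ≥0∞} (hf : Monotone f) (hg : Monotone g) :
    (⨆ n, f n) * (⨆ n, g n) = ⨆ n, f n * g n := by
  apply le_antisymm
  · rw [ENNReal.iSup_mul]
    refine iSup_le fun n => ?_
    rw [ENNReal.mul_iSup]
    refine iSup_le fun m => ?_
    calc f n * g m ≤ f (max n m) * g (max n m) :=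
          mul_le_mul' (hf (le_max_left _ _)) (hg (le_max_right _ _))
      _ ≤ ⨆ k, f k * g k := le_iSup (fun k => f k * g k) (max n m)
  · exact iSup_le fun n => mul_le_mul' (le_iSup f n) (le_iSup g n)

lemma tsum_iSup_mono {Y : Type*} [Countable Y] {f : ℕ → Y → ℝ≥0∞}
    (hf : Monotone f) : ∑' z, ⨆ n, f n z = ⨆ n, ∑' z, f n z := by
  letI : MeasurableSpace Y := ⊤
  haveI : MeasurableSingletonClass Y := ⟨fun _ => trivial⟩
  have hm : ∀ n, Measurable (f n) := fun n _ _ => trivial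
  calc ∑' z, ⨆ n, f n z = ∫⁻ z, ⨆ n, f n z ∂(MeasureTheory.Measure.count) :=
        (MeasureTheory.lintegral_count _).symm
    _ = ⨆ n, ∫⁻ z, f n z ∂(MeasureTheory.Measure.count) :=
        MeasureTheory.lintegral_iSup hm hf
    _ = ⨆ n, ∑' z, f n z := by simp_rw [MeasureTheory.lintegral_count]



/-- Key lower bound: if there is an `l`-step path from `x` to `y` with positive finite
weight, then each `k`-step diagonal root is below the limsup root at `(x, y)`. -/
lemma lemA {μ : X → X → ℝ≥0∞} {x y : X} {l k : ℕ} (hk : 0 < k)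
    (hc : 0 < matPow μ l x y) (hcT : matPow μ l x y ≠ ⊤)
    (haT : matPow μ k x x ≠ ⊤) :
    matPow μ k x x ^ (k : ℝ)⁻¹ ≤ lsRoot μ x y := by
  set a := matPow μ k x x with ha
  set c := matPow μ l x y with hcdef
  have hkR : (0 : ℝ) < (k : ℝ)⁻¹ := by
    have : (0 : ℝ) < (k : ℝ) := by exact_mod_cast hk
    positivity
  rcases eq_or_ne a 0 with h0 | h0
  · rw [h0, ENNReal.zero_rpow_of_pos hkR]
    exact zero_le
  set φ : ℕ → ℕ := fun m => m * k + l with hφdef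
  have hφ : Tendsto φ atTop atTop :=
    tendsto_atTop_mono
      (fun m => le_trans (Nat.le_mul_of_pos_right m hk) (Nat.le_add_right _ _)) tendsto_id
  set b : ℕ → ℝ≥0∞ := fun j => matPow μ j x y ^ (j : ℝ)⁻¹ with hbdef
  set g : ℕ → ℝ≥0∞ := fun m => (a ^ m * c) ^ ((φ m : ℝ))⁻¹ with hgdef
  have hgb : ∀ m, g m ≤ b (φ m) := by
    intro m
    apply ENNReal.rpow_le_rpow _ (by positivity)
    calc a ^ m * c ≤ matPow μ (m * k) x x * c :=
          mul_le_mul' (pow_le_matPow_mul μ k x m) le_rfl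
      _ ≤ matPow μ (m * k + l) x y := le_matPow_add μ (m * k) l x x y
  have hcast : ∀ m : ℕ, ((φ m : ℕ) : ℝ) = (m : ℝ) * k + l := by
    intro m; simp only [hφdef]; push_cast; ring
  have hglim : Tendsto g atTop (nhds (a ^ (k : ℝ)⁻¹)) := by
    have hge : ∀ m, g m = a ^ ((m : ℝ) * ((φ m : ℝ))⁻¹) * c ^ (((φ m : ℝ))⁻¹) := by
      intro m
      rw [hgdef]
      simp only
      rw [ENNReal.mul_rpow_of_nonneg _ _ (by positivity), ← ENNReal.rpow_natCast a m,
        ← ENNReal.rpow_mul]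
    have hm0 : Tendsto (fun m : ℕ => (m : ℝ)⁻¹) atTop (nhds 0) :=
      tendsto_inv_atTop_nhds_zero_nat
    have hden : Tendsto (fun m : ℕ => (k : ℝ) + (l : ℝ) * (m : ℝ)⁻¹) atTop
        (nhds ((k : ℝ))) := by
      have h : Tendsto (fun m : ℕ => (k : ℝ) + (l : ℝ) * (m : ℝ)⁻¹) atTop
          (nhds ((k : ℝ) + (l : ℝ) * 0)) := tendsto_const_nhds.add (hm0.const_mul _)
      simpa using h
    have hkne : ((k : ℝ)) ≠ 0 := by exact_mod_cast hk.ne'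
    have h1 : Tendsto (fun m : ℕ => (m : ℝ) * ((φ m : ℝ))⁻¹) atTop (nhds ((k : ℝ)⁻¹)) := by
      have h1' := hden.inv₀ hkne
      apply h1'.congr'
      filter_upwards [eventually_ge_atTop 1] with m hm
      have hmp : (0 : ℝ) < (m : ℝ) := by exact_mod_cast hm
      rw [hcast m]
      have h2 : ((m : ℝ) * k + l) / m = (k : ℝ) + (l : ℝ) * (m : ℝ)⁻¹ := by
        rw [add_div, mul_comm (m : ℝ) (k : ℝ), mul_div_assoc, div_self hmp.ne', mul_one,
          div_eq_mul_inv]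
      rw [← h2, inv_div, div_eq_mul_inv]
    have h2 : Tendsto (fun m : ℕ => ((φ m : ℝ))⁻¹) atTop (nhds 0) :=
      tendsto_inv_atTop_nhds_zero_nat.comp hφ
    have t1 := tendsto_rpow_exp h0 haT h1
    have t2 := tendsto_rpow_exp hc.ne' hcT h2
    rw [ENNReal.rpow_zero] at t2
    have t3 := ENNReal.Tendsto.mul t1 (Or.inr (by simp : (1 : ℝ≥0∞) ≠ ⊤)) t2
      (Or.inl (by simp : (1 : ℝ≥0∞) ≠ 0))
    rw [mul_one] at t3
    exact Tendsto.congr (fun m => (hge m).symm) t3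
  calc a ^ (k : ℝ)⁻¹ = liminf g atTop := hglim.liminf_eq.symm
    _ ≤ liminf (b ∘ φ) atTop := liminf_le_liminf (Eventually.of_forall hgb)
    _ ≤ limsup (b ∘ φ) atTop := liminf_le_limsup
    _ ≤ limsup b atTop := limsup_comp_le b φ hφ
    _ = lsRoot μ x y := rfl


lemma lsRoot_le_K {μ : X → X → ℝ≥0∞} {K : ℝ≥0∞} (hK : ∀ a, ∑' b, μ a b ≤ K)
    (x y : X) : lsRoot μ x y ≤ K := by
  apply limsup_le_of_le (by isBoundedDefault)
  filter_upwards [eventually_ge_atTop 1] with j hj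
  have hjne : ((j : ℝ)) ≠ 0 := by
    have : (0 : ℝ) < (j : ℝ) := by exact_mod_cast hj
    exact this.ne'
  calc matPow μ j x y ^ ((j : ℝ))⁻¹ ≤ (K ^ j) ^ ((j : ℝ))⁻¹ :=
        ENNReal.rpow_le_rpow (matPow_le hK j x y) (by positivity)
    _ = K := by
        rw [← ENNReal.rpow_natCast K j, ← ENNReal.rpow_mul, mul_inv_cancel₀ hjne,
          ENNReal.rpow_one]

lemma diag_le_rpow {μ : X → X → ℝ≥0∞} {K : ℝ≥0∞} (hK : ∀ a, ∑' b, μ a b ≤ K)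
    (hKt : K ≠ ⊤) (x : X) {j : ℕ} (hj : 1 ≤ j) :
    matPow μ j x x ≤ lsRoot μ x x ^ ((j : ℝ)) := by
  have hjne : ((j : ℝ)) ≠ 0 := by
    have : (0 : ℝ) < (j : ℝ) := by exact_mod_cast hj
    exact this.ne'
  have hc0 : 0 < matPow μ 0 x x := by simp [matPow_zero]
  have h := lemA (μ := μ) (l := 0) (k := j) hj hc0 (by simp [matPow_zero])
    (matPow_ne_top hK hKt j x x)
  calc matPow μ j x x = matPow μ j x x ^ (((j : ℝ))⁻¹ * (j : ℝ)) := by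
        rw [inv_mul_cancel₀ hjne, ENNReal.rpow_one]
    _ = (matPow μ j x x ^ ((j : ℝ))⁻¹) ^ ((j : ℝ)) := ENNReal.rpow_mul _ _ _
    _ ≤ lsRoot μ x x ^ ((j : ℝ)) := ENNReal.rpow_le_rpow h (by positivity)

/-- Upper bound: if there is a positive-weight path from `y` back to `x`, then the
limsup root at `(x, y)` is at most the one at `(x, x)`. -/
lemma lemI {μ : X → X → ℝ≥0∞} {K : ℝ≥0∞} (hK : ∀ a, ∑' b, μ a b ≤ K) (hKt : K ≠ ⊤)
    {x y : X} {l : ℕ} (hc : 0 < matPow μ l y x) (hρ0 : 0 < lsRoot μ x x) :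
    lsRoot μ x y ≤ lsRoot μ x x := by
  set ρ := lsRoot μ x x with hρdef
  set c := matPow μ l y x with hcdef
  have hcT : c ≠ ⊤ := matPow_ne_top hK hKt l y x
  have hρK : ρ ≤ K := lsRoot_le_K hK x x
  have hρT : ρ ≠ ⊤ := ne_top_of_le_ne_top hKt hρK
  set h : ℕ → ℝ≥0∞ := fun j => ρ ^ ((l : ℝ) * ((j : ℝ))⁻¹) * (c⁻¹) ^ (((j : ℝ))⁻¹)
    with hhdef
  have hbound : ∀ j, 1 ≤ j → matPow μ j x y ^ ((j : ℝ))⁻¹ ≤ ρ * h j := by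
    intro j hj
    have hjR : (0 : ℝ) < (j : ℝ) := by exact_mod_cast hj
    have hbjc : matPow μ j x y * c ≤ matPow μ (j + l) x x := le_matPow_add μ j l x y x
    have h1 : matPow μ (j + l) x x ≤ ρ ^ (((j + l : ℕ)) : ℝ) :=
      diag_le_rpow hK hKt x (by omega)
    have h2 : matPow μ j x y ≤ ρ ^ (((j + l : ℕ)) : ℝ) * c⁻¹ := by
      rw [← div_eq_mul_inv, ENNReal.le_div_iff_mul_le (Or.inl hc.ne') (Or.inl hcT)]
      exact le_trans hbjc h1
    calc matPow μ j x y ^ ((j : ℝ))⁻¹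
        ≤ (ρ ^ (((j + l : ℕ)) : ℝ) * c⁻¹) ^ ((j : ℝ))⁻¹ :=
          ENNReal.rpow_le_rpow h2 (by positivity)
      _ = ρ ^ ((((j + l : ℕ)) : ℝ) * ((j : ℝ))⁻¹) * (c⁻¹) ^ ((j : ℝ))⁻¹ := by
          rw [ENNReal.mul_rpow_of_nonneg _ _ (by positivity), ← ENNReal.rpow_mul]
      _ = ρ * h j := by
          have : (((j + l : ℕ)) : ℝ) * ((j : ℝ))⁻¹ = 1 + (l : ℝ) * ((j : ℝ))⁻¹ := by
            push_cast
            field_simp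
          rw [this, ENNReal.rpow_add _ _ hρ0.ne' hρT, ENNReal.rpow_one, hhdef, mul_assoc]
  have hm0 : Tendsto (fun j : ℕ => (j : ℝ)⁻¹) atTop (nhds 0) :=
    tendsto_inv_atTop_nhds_zero_nat
  have ht1 : Tendsto (fun j : ℕ => ρ ^ ((l : ℝ) * ((j : ℝ))⁻¹)) atTop (nhds 1) := by
    have he : Tendsto (fun j : ℕ => (l : ℝ) * ((j : ℝ))⁻¹) atTop (nhds ((l : ℝ) * 0)) :=
      hm0.const_mul _
    rw [mul_zero] at he
    have := tendsto_rpow_exp hρ0.ne' hρT he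
    rwa [ENNReal.rpow_zero] at this
  have ht2 : Tendsto (fun j : ℕ => (c⁻¹) ^ (((j : ℝ))⁻¹)) atTop (nhds 1) := by
    have := tendsto_rpow_exp (ENNReal.inv_ne_zero.mpr hcT) (ENNReal.inv_ne_top.mpr hc.ne') hm0
    rwa [ENNReal.rpow_zero] at this
  have hh1 : Tendsto h atTop (nhds 1) := by
    have := ENNReal.Tendsto.mul ht1 (Or.inl one_ne_zero) ht2 (Or.inl one_ne_zero)
    rwa [mul_one] at this
  have htend : Tendsto (fun j => ρ * h j) atTop (nhds ρ) := by
    have := ENNReal.Tendsto.const_mul (a := ρ) hh1 (Or.inl one_ne_zero)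
    rwa [mul_one] at this
  calc lsRoot μ x y ≤ limsup (fun j => ρ * h j) atTop := by
        apply limsup_le_limsup ?_ (by isBoundedDefault) (by isBoundedDefault)
        filter_upwards [eventually_ge_atTop 1] with j hj
        exact hbound j hj
    _ = ρ := htend.limsup_eq

end TruncAux

/-- Lemma 3.1, convergence part: the truncated convergence parameters
`ₙR` decrease to `R_μ`: their infimum equals `R_μ` and they converge to `R_μ`. -/

theorem truncated_convergence_parameter_tendsto
    {X : Type*} [Countable X] [DecidableEq X]
    (μ : X → X → ℝ≥0∞) (hbdd : bddRows μ) (hconn : connectedW μ)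
    (S : ℕ → Set X) (hfin : ∀ n, (S n).Finite) (hmono : ∀ n, S n ⊆ S (n + 1))
    (hcover : ⋃ n, S n = Set.univ)
    (hconnS : ∀ n, ∀ x ∈ S n, ∀ y ∈ S n,
      ∃ k, 0 < k ∧ 0 < matPow (restrictW μ (S n)) k x y) :
    ∀ x y : X,
      (⨅ n, convR (restrictW μ (S n)) x y) = convR μ x y ∧
      Tendsto (fun n => convR (restrictW μ (S n)) x y) atTop (nhds (convR μ x y)) := by
  classical
  intro x y
  obtain ⟨K, hKt, hK⟩ := hbdd
  have hSle : ∀ m n : ℕ, m ≤ n → S m ⊆ S n := fun m n h => monotone_nat_of_le_succ hmono h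
  have hrle : ∀ n a b, restrictW μ (S n) a b ≤ μ a b := by
    intro n a b
    simp only [restrictW]
    split_ifs with h1
    · exact le_rfl
    · exact zero_le
  have hrmono : ∀ m n : ℕ, m ≤ n → ∀ a b, restrictW μ (S m) a b ≤ restrictW μ (S n) a b := by
    intro m n hmn a b
    simp only [restrictW]
    split_ifs with h1 h2
    · exact le_rfl
    · exact absurd ⟨hSle m n hmn h1.1, hSle m n hmn h1.2⟩ h2
    · exact zero_le
    · exact le_rfl
  have hKn : ∀ n a, ∑' b, restrictW μ (S n) a b ≤ K := fun n a =>
    le_trans (ENNReal.tsum_le_tsum fun b => hrle n a b) (hK a)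
  have hmemS : ∀ a : X, ∃ n, a ∈ S n := by
    intro a
    have : a ∈ ⋃ n, S n := by rw [hcover]; trivial
    exact Set.mem_iUnion.mp this
  have hkernel_sup : ∀ a b, (⨆ n, restrictW μ (S n) a b) = μ a b := by
    intro a b
    apply le_antisymm (iSup_le fun n => hrle n a b)
    obtain ⟨na, hna⟩ := hmemS a
    obtain ⟨nb, hnb⟩ := hmemS b
    have hmema : a ∈ S (max na nb) := hSle na _ (le_max_left _ _) hna
    have hmemb : b ∈ S (max na nb) := hSle nb _ (le_max_right _ _) hnb
    have heq : restrictW μ (S (max na nb)) a b = μ a b := by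
      simp only [restrictW]
      exact if_pos ⟨hmema, hmemb⟩
    rw [← heq]
    exact le_iSup (fun n => restrictW μ (S n) a b) _
  have hPmono : ∀ k a b, Monotone fun n => matPow (restrictW μ (S n)) k a b :=
    fun k a b m n hmn => TruncAux.matPow_mono (hrmono m n hmn) k a b
  have hPsup : ∀ k a b, matPow μ k a b = ⨆ n, matPow (restrictW μ (S n)) k a b := by
    intro k
    induction k with
    | zero =>
        intro a b
        rw [TruncAux.matPow_zero]
        rw [show (fun n => matPow (restrictW μ (S n)) 0 a b)
          = fun _ => if a = b then (1 : ℝ≥0∞) else 0 from rfl, iSup_const]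
    | succ k ih =>
        intro a b
        rw [TruncAux.matPow_succ]
        calc ∑' z, matPow μ k a z * μ z b
            = ∑' z, ⨆ n, matPow (restrictW μ (S n)) k a z * restrictW μ (S n) z b := by
              congr 1
              ext z
              rw [ih a z, ← hkernel_sup z b]
              exact TruncAux.iSup_mul_iSup_mono (fun m n hmn => hPmono k a z hmn)
                (fun m n hmn => hrmono m n hmn z b)
          _ = ⨆ n, ∑' z, matPow (restrictW μ (S n)) k a z * restrictW μ (S n) z b := by
              apply TruncAux.tsum_iSup_mono
              intro m n hmn z
              exact mul_le_mul' (hPmono k a z hmn) (hrmono m n hmn z b)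
          _ = ⨆ n, matPow (restrictW μ (S n)) (k + 1) a b := rfl
  have hLmono : Monotone fun n => lsRoot (restrictW μ (S n)) x y := by
    intro m n hmn
    apply limsup_le_limsup ?_ (by isBoundedDefault) (by isBoundedDefault)
    exact Eventually.of_forall fun j =>
      ENNReal.rpow_le_rpow (hPmono j x y hmn) (by positivity)
  have hLle : ∀ n, lsRoot (restrictW μ (S n)) x y ≤ lsRoot μ x y := by
    intro n
    apply limsup_le_limsup ?_ (by isBoundedDefault) (by isBoundedDefault)
    exact Eventually.of_forall fun j =>
      ENNReal.rpow_le_rpow (TruncAux.matPow_mono (hrle n) j x y) (by positivity)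
  obtain ⟨nx, hnx⟩ := hmemS x
  obtain ⟨ny, hny⟩ := hmemS y
  have hxN : x ∈ S (max nx ny) := hSle nx _ (le_max_left _ _) hnx
  have hyN : y ∈ S (max nx ny) := hSle ny _ (le_max_right _ _) hny
  have key : ∀ n j, 1 ≤ j → matPow (restrictW μ (S n)) j x x ^ ((j : ℝ))⁻¹
      ≤ ⨆ m, lsRoot (restrictW μ (S m)) x y := by
    intro n j hj
    set n' := max n (max nx ny) with hn'
    have h1 : matPow (restrictW μ (S n)) j x x ≤ matPow (restrictW μ (S n')) j x x :=
      hPmono j x x (le_max_left _ _)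
    have hx' : x ∈ S n' := hSle _ _ (le_max_right n _) hxN
    have hy' : y ∈ S n' := hSle _ _ (le_max_right n _) hyN
    obtain ⟨l, hl, hcl⟩ := hconnS n' x hx' y hy'
    have h2 : matPow (restrictW μ (S n')) j x x ^ ((j : ℝ))⁻¹
        ≤ lsRoot (restrictW μ (S n')) x y :=
      TruncAux.lemA hj hcl (TruncAux.matPow_ne_top (hKn n') hKt l x y)
        (TruncAux.matPow_ne_top (hKn n') hKt j x x)
    calc matPow (restrictW μ (S n)) j x x ^ ((j : ℝ))⁻¹
        ≤ matPow (restrictW μ (S n')) j x x ^ ((j : ℝ))⁻¹ :=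
          ENNReal.rpow_le_rpow h1 (by positivity)
      _ ≤ lsRoot (restrictW μ (S n')) x y := h2
      _ ≤ ⨆ m, lsRoot (restrictW μ (S m)) x y := le_iSup (fun m => lsRoot (restrictW μ (S m)) x y) n'
  have hdiag : lsRoot μ x x ≤ ⨆ m, lsRoot (restrictW μ (S m)) x y := by
    apply limsup_le_of_le (by isBoundedDefault)
    filter_upwards [eventually_ge_atTop 1] with j hj
    rw [hPsup j x x, TruncAux.rpow_iSup (fun m n hmn => hPmono j x x hmn) (by positivity)]
    exact iSup_le fun n => key n j hj
  have hρ0 : 0 < lsRoot μ x x := by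
    obtain ⟨k0, hk0, hP0⟩ := hconn x x
    have hfin0 := TruncAux.matPow_ne_top hK hKt k0 x x
    have h := TruncAux.lemA (μ := μ) (l := 0) hk0
      (by simp [TruncAux.matPow_zero] : (0 : ℝ≥0∞) < matPow μ 0 x x)
      (by simp [TruncAux.matPow_zero]) hfin0
    exact lt_of_lt_of_le (ENNReal.rpow_pos hP0 hfin0) h
  have hxy_le : lsRoot μ x y ≤ lsRoot μ x x := by
    obtain ⟨l, hl, hcl⟩ := hconn y x
    exact TruncAux.lemI hK hKt hcl hρ0
  have hfinal : lsRoot μ x y = ⨆ m, lsRoot (restrictW μ (S m)) x y :=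
    le_antisymm (le_trans hxy_le hdiag) (iSup_le hLle)
  have hinf : (⨅ n, convR (restrictW μ (S n)) x y) = convR μ x y := by
    calc ⨅ n, convR (restrictW μ (S n)) x y
        = ⨅ n, (lsRoot (restrictW μ (S n)) x y)⁻¹ := rfl
      _ = (⨆ n, lsRoot (restrictW μ (S n)) x y)⁻¹ := (ENNReal.inv_iSup _).symm
      _ = (lsRoot μ x y)⁻¹ := by rw [hfinal]
      _ = convR μ x y := rfl
  refine ⟨hinf, ?_⟩
  have hanti : Antitone fun n => convR (restrictW μ (S n)) x y := fun m n hmn =>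
    ENNReal.inv_le_inv.mpr (hLmono hmn)
  have ht := tendsto_atTop_iInf hanti
  rwa [hinf] at ht
end

section
/- Let (X,μ) be a connected weighted graph with bounded row sums, and let {X_n} be a sequence of finite subsets of X with X_n ⊆ X_{n+1}, ⋃_n X_n = X, and each (X_n, ₙμ) connected, where ₙμ is the restriction of μ to X_n × X_n. Let {(Y_n, μ_n)} be a sequence of connected weighted graphs with X_n ⊆ Y_n ⊆ X, μ_n(x,y) ≤ μ(x,y) for all n and all x,y ∈ Y_n (extending μ_n by 0 outside Y_n × Y_n), and μ_n(x,y) → μ(x,y) as n → ∞ for all x,y ∈ X. Then R(Y_n, μ_n) ≥ R_μ for every n, and R(Y_n, μ_n) → R_μ as n → ∞; equivalently, the strong survival critical parameters satisfy λ_s(Y_n,μ_n) ≥ λ_s(X,μ) and λ_s(Y_n,μ_n) → λ_s(X,μ). -/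
open Filter MeasureTheory ProbabilityTheory
open scoped ENNReal NNReal

section Aux

variable {X : Type*} [DecidableEq X]

lemma matPow_mono {κ κ' : X → X → ℝ≥0∞} (h : ∀ x y, κ x y ≤ κ' x y) :
    ∀ k x y, matPow κ k x y ≤ matPow κ' k x y := by
  intro k
  induction k with
  | zero => intro x y; simp [matPow]
  | succ k ih =>
      intro x y
      simp only [matPow]
      exact ENNReal.tsum_le_tsum fun z => mul_le_mul' (ih x z) (h z y)

lemma matPow_add (κ : X → X → ℝ≥0∞) (p q : ℕ) (x y : X) :
    matPow κ (p + q) x y = ∑' z, matPow κ p x z * matPow κ q z y := by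
  induction q generalizing y with
  | zero =>
      simp only [Nat.add_zero, matPow]
      rw [tsum_eq_single y]
      · simp [matPow]
      · intro z hz; simp [matPow, hz]
  | succ q ih =>
      have : p + (q + 1) = (p + q) + 1 := by ring
      rw [this]
      simp only [matPow]
      calc ∑' w, matPow κ (p + q) x w * κ w y
          = ∑' w, (∑' z, matPow κ p x z * matPow κ q z w) * κ w y := by
            simp_rw [ih]
        _ = ∑' w, ∑' z, matPow κ p x z * (matPow κ q z w * κ w y) := by
            congr 1; funext w; rw [← ENNReal.tsum_mul_right]; simp_rw [mul_assoc]
        _ = ∑' z, ∑' w, matPow κ p x z * (matPow κ q z w * κ w y) := ENNReal.tsum_comm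
        _ = ∑' z, matPow κ p x z * matPow κ (q + 1) z y := by
            congr 1; funext z; rw [ENNReal.tsum_mul_left]; rfl

lemma matPow_rowsum_le {κ : X → X → ℝ≥0∞} {K : ℝ≥0∞} (hK : ∀ x, ∑' y, κ x y ≤ K) :
    ∀ k x, ∑' y, matPow κ k x y ≤ K ^ k := by
  intro k
  induction k with
  | zero =>
      intro x
      rw [pow_zero]
      rw [tsum_eq_single x (by intro z hz; simp [matPow, Ne.symm hz])]
      simp [matPow]
  | succ k ih =>
      intro x
      simp only [matPow]
      rw [ENNReal.tsum_comm]
      calc ∑' z, ∑' y, matPow κ k x z * κ z y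
          = ∑' z, matPow κ k x z * ∑' y, κ z y := by simp_rw [ENNReal.tsum_mul_left]
        _ ≤ ∑' z, matPow κ k x z * K := ENNReal.tsum_le_tsum fun z =>
            mul_le_mul_right (hK z) _
        _ = (∑' z, matPow κ k x z) * K := by rw [ENNReal.tsum_mul_right]
        _ ≤ K ^ k * K := mul_le_mul_left (ih x) _
        _ = K ^ (k + 1) := by ring

lemma matPow_le_pow {κ : X → X → ℝ≥0∞} {K : ℝ≥0∞} (hK : ∀ x, ∑' y, κ x y ≤ K)
    (k : ℕ) (x y : X) : matPow κ k x y ≤ K ^ k :=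
  le_trans (ENNReal.le_tsum y) (matPow_rowsum_le hK k x)

end Aux

section Aux2

variable {X : Type*} [DecidableEq X]

/-- Fatou's lemma for `tsum` on a countable type. -/
lemma tsum_liminf_le {Y : Type*} [Countable Y] (f : ℕ → Y → ℝ≥0∞) :
    ∑' z, Filter.liminf (fun n => f n z) Filter.atTop
      ≤ Filter.liminf (fun n => ∑' z, f n z) Filter.atTop := by
  letI : MeasurableSpace Y := ⊤
  haveI : MeasurableSingletonClass Y := ⟨fun _ => trivial⟩
  have h := lintegral_liminf_le (μ := Measure.count)
    (f := fun n (z : Y) => f n z) (u := Filter.atTop) (fun n => measurable_from_top)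
  simpa [lintegral_count] using h

/-- Supermultiplicativity of diagonal entries. -/
lemma matPow_diag_supmul (κ : X → X → ℝ≥0∞) (p q : ℕ) (x : X) :
    matPow κ p x x * matPow κ q x x ≤ matPow κ (p + q) x x := by
  rw [matPow_add]
  exact ENNReal.le_tsum x

lemma matPow_diag_pow_le (κ : X → X → ℝ≥0∞) (k : ℕ) (x : X) :
    ∀ j, (matPow κ k x x) ^ j ≤ matPow κ (k * j) x x := by
  intro j
  induction j with
  | zero => simp [matPow]
  | succ j ih =>
      have : k * (j + 1) = k * j + k := by ring
      rw [this, pow_succ]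
      calc matPow κ k x x ^ j * matPow κ k x x
          ≤ matPow κ (k * j) x x * matPow κ k x x := mul_le_mul_left ih _
        _ ≤ matPow κ (k * j + k) x x := matPow_diag_supmul κ _ _ x

/-- Fekete-type bound: each root is below the limsup of roots, on the diagonal. -/
lemma root_le_lsRoot (κ : X → X → ℝ≥0∞) (x : X) {k : ℕ} (hk : 0 < k) :
    (matPow κ k x x) ^ (k : ℝ)⁻¹ ≤ lsRoot κ x x := by
  apply Filter.le_limsup_of_frequently_le
  · rw [Filter.frequently_atTop]
    intro N
    refine ⟨k * (N + 1), ?_, ?_⟩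
    · calc N ≤ N + 1 := Nat.le_succ N
        _ ≤ k * (N + 1) := Nat.le_mul_of_pos_left _ hk
    · have h1 : (matPow κ k x x) ^ (N + 1) ≤ matPow κ (k * (N + 1)) x x :=
        matPow_diag_pow_le κ k x (N + 1)
      have h2 : ((matPow κ k x x) ^ (N + 1) : ℝ≥0∞) ^ ((k * (N + 1) : ℕ) : ℝ)⁻¹
          = (matPow κ k x x) ^ (k : ℝ)⁻¹ := by
        rw [← ENNReal.rpow_natCast (matPow κ k x x) (N + 1), ← ENNReal.rpow_mul]
        congr 1
        have hk' : (k : ℝ) ≠ 0 := Nat.cast_ne_zero.2 hk.ne'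
        have hN' : ((N : ℝ) + 1) ≠ 0 := by positivity
        push_cast
        field_simp
      rw [← h2]
      exact ENNReal.rpow_le_rpow h1 (by positivity)
  · isBoundedDefault

/-- Transfer lemma for limsups of roots. -/
lemma limsup_root_le_of_le {a b : ℕ → ℝ≥0∞} {C : ℝ≥0∞} (hC : C ≠ ⊤) {s : ℕ}
    (hab : ∀ k, a k ≤ C * b (k + s)) :
    Filter.limsup (fun k : ℕ => a k ^ (k : ℝ)⁻¹) Filter.atTop
      ≤ Filter.limsup (fun m : ℕ => b m ^ (m : ℝ)⁻¹) Filter.atTop := by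
  set L := Filter.limsup (fun k : ℕ => a k ^ (k : ℝ)⁻¹) Filter.atTop with hL
  set M := Filter.limsup (fun m : ℕ => b m ^ (m : ℝ)⁻¹) Filter.atTop with hM
  by_contra hcon
  push_neg at hcon
  obtain ⟨r₁, hMr₁, hr₁L⟩ := exists_between hcon
  obtain ⟨r₂, hr₁r₂, hr₂L⟩ := exists_between hr₁L
  have hr₁0 : r₁ ≠ 0 := fun h => by simp [h] at hMr₁
  have hr₁t : r₁ ≠ ⊤ := hr₁r₂.ne_top
  -- eventually b m ≤ r₁ ^ m
  have hev : ∀ᶠ m : ℕ in Filter.atTop, b m ^ (m : ℝ)⁻¹ < r₁ :=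
    Filter.eventually_lt_of_limsup_lt hMr₁
  have hb : ∀ᶠ m : ℕ in Filter.atTop, b m ≤ r₁ ^ m := by
    filter_upwards [hev, Filter.eventually_ge_atTop 1] with m hm hm1
    have hm0 : (m : ℝ) ≠ 0 := Nat.cast_ne_zero.2 (by omega)
    calc b m = (b m ^ (m : ℝ)⁻¹) ^ (m : ℕ) := by
          rw [← ENNReal.rpow_natCast _ m, ← ENNReal.rpow_mul,
            inv_mul_cancel₀ hm0, ENNReal.rpow_one]
      _ ≤ r₁ ^ m := pow_le_pow_left' hm.le m
  set D := C * r₁ ^ s with hD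
  have hDt : D ≠ ⊤ := ENNReal.mul_ne_top hC (ENNReal.pow_ne_top hr₁t)
  have ha : ∀ᶠ k : ℕ in Filter.atTop, a k ^ (k : ℝ)⁻¹ ≤ D ^ ((k : ℝ))⁻¹ * r₁ := by
    filter_upwards [(Filter.tendsto_add_atTop_nat s).eventually hb,
      Filter.eventually_ge_atTop 1] with k hk hk1
    have hk0 : (k : ℝ) ≠ 0 := Nat.cast_ne_zero.2 (by omega)
    have h1 : a k ≤ D * r₁ ^ k := by
      calc a k ≤ C * b (k + s) := hab k
        _ ≤ C * r₁ ^ (k + s) := mul_le_mul_right hk _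
        _ = D * r₁ ^ k := by rw [hD, pow_add]; ring
    calc a k ^ (k : ℝ)⁻¹ ≤ (D * r₁ ^ k) ^ (k : ℝ)⁻¹ :=
          ENNReal.rpow_le_rpow h1 (by positivity)
      _ = D ^ ((k : ℝ))⁻¹ * (r₁ ^ k) ^ ((k : ℝ))⁻¹ :=
          ENNReal.mul_rpow_of_nonneg _ _ (by positivity)
      _ = D ^ ((k : ℝ))⁻¹ * r₁ := by
          rw [← ENNReal.rpow_natCast r₁ k, ← ENNReal.rpow_mul,
            mul_inv_cancel₀ hk0, ENNReal.rpow_one]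
  -- eventually D ^ (1/k) ≤ r₂ / r₁
  have hy : (1 : ℝ≥0∞) < r₂ / r₁ := by
    rw [ENNReal.lt_div_iff_mul_lt (Or.inl hr₁0) (Or.inl hr₁t), one_mul]
    exact hr₁r₂
  have hDev : ∀ᶠ k : ℕ in Filter.atTop, D ^ (1 / (k : ℝ)) ≤ r₂ / r₁ :=
    ENNReal.eventually_pow_one_div_le hDt hy
  have hfin : ∀ᶠ k : ℕ in Filter.atTop, a k ^ (k : ℝ)⁻¹ ≤ r₂ := by
    filter_upwards [ha, hDev] with k h1 h2
    calc a k ^ (k : ℝ)⁻¹ ≤ D ^ ((k : ℝ))⁻¹ * r₁ := h1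
      _ ≤ (r₂ / r₁) * r₁ := by
          rw [← one_div]
          exact mul_le_mul_left h2 _
      _ = r₂ := ENNReal.div_mul_cancel hr₁0 hr₁t
  have : L ≤ r₂ := Filter.limsup_le_of_le (by isBoundedDefault) hfin
  exact absurd (this.trans_lt hr₂L) (lt_irrefl _)

end Aux2

section Aux3

variable {X : Type*} [DecidableEq X]

lemma liminf_matPow [Countable X] {μ : X → X → ℝ≥0∞} {ν : ℕ → X → X → ℝ≥0∞}
    (hlim : ∀ x y, Filter.Tendsto (fun n => ν n x y) Filter.atTop (nhds (μ x y))) :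
    ∀ k x y, matPow μ k x y ≤ Filter.liminf (fun n => matPow (ν n) k x y) Filter.atTop := by
  intro k
  induction k with
  | zero =>
      intro x y
      simp only [matPow, Filter.liminf_const]
      exact le_rfl
  | succ k ih =>
      intro x y
      calc matPow μ (k + 1) x y
          = ∑' z, matPow μ k x z * μ z y := rfl
        _ ≤ ∑' z, Filter.liminf (fun n => matPow (ν n) k x z * ν n z y) Filter.atTop := by
            apply ENNReal.tsum_le_tsum
            intro z
            calc matPow μ k x z * μ z y
                ≤ (Filter.liminf (fun n => matPow (ν n) k x z) Filter.atTop)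
                    * (Filter.liminf (fun n => ν n z y) Filter.atTop) := by
                  rw [(hlim z y).liminf_eq]
                  exact mul_le_mul_left (ih x z) _
              _ ≤ Filter.liminf (fun n => matPow (ν n) k x z * ν n z y) Filter.atTop :=
                  ENNReal.le_liminf_mul
        _ ≤ Filter.liminf (fun n => ∑' z, matPow (ν n) k x z * ν n z y) Filter.atTop :=
            tsum_liminf_le _
        _ = Filter.liminf (fun n => matPow (ν n) (k + 1) x y) Filter.atTop := rfl

lemma lsRoot_transfer {κ : X → X → ℝ≥0∞} {K : ℝ≥0∞} (hKt : K ≠ ⊤)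
    (hK : ∀ x, ∑' y, κ x y ≤ K) {x y x' y' : X} {p q : ℕ}
    (hp : 0 < matPow κ p x' x) (hq : 0 < matPow κ q y y') :
    lsRoot κ x y ≤ lsRoot κ x' y' := by
  set c := matPow κ p x' x with hc
  set d := matPow κ q y y' with hd
  have hct : c ≠ ⊤ := (matPow_le_pow hK p x' x).trans_lt
    (lt_top_iff_ne_top.2 (ENNReal.pow_ne_top hKt)) |>.ne
  have hdt : d ≠ ⊤ := (matPow_le_pow hK q y y').trans_lt
    (lt_top_iff_ne_top.2 (ENNReal.pow_ne_top hKt)) |>.ne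
  have he0 : c * d ≠ 0 := mul_ne_zero hp.ne' hq.ne'
  have het : c * d ≠ ⊤ := ENNReal.mul_ne_top hct hdt
  have hab : ∀ k, matPow κ k x y ≤ (c * d)⁻¹ * matPow κ (k + (p + q)) x' y' := by
    intro k
    have h1 : c * matPow κ (k + q) x y' ≤ matPow κ (p + (k + q)) x' y' := by
      rw [matPow_add κ p (k + q) x' y']
      exact ENNReal.le_tsum x
    have h2 : matPow κ k x y * d ≤ matPow κ (k + q) x y' := by
      rw [matPow_add κ k q x y']
      exact ENNReal.le_tsum y
    have h3 : (c * d) * matPow κ k x y ≤ matPow κ (k + (p + q)) x' y' := by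
      have : k + (p + q) = p + (k + q) := by ring
      rw [this]
      calc (c * d) * matPow κ k x y = c * (matPow κ k x y * d) := by ring
        _ ≤ c * matPow κ (k + q) x y' := mul_le_mul_right h2 _
        _ ≤ matPow κ (p + (k + q)) x' y' := h1
    calc matPow κ k x y = (c * d)⁻¹ * ((c * d) * matPow κ k x y) := by
          rw [← mul_assoc, ENNReal.inv_mul_cancel he0 het, one_mul]
      _ ≤ (c * d)⁻¹ * matPow κ (k + (p + q)) x' y' := mul_le_mul_right h3 _
  exact limsup_root_le_of_le (ENNReal.inv_ne_top.2 he0) hab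

end Aux3

/-- Theorem 3.2: spatial approximation of the strong critical parameter.
If `X_n ⊆ Y_n`, `μ_n ≤ μ`, `μ_n → μ` pointwise and all graphs involved are connected, then
`λ_s(Y_n, μ_n) = R(Y_n, μ_n) ≥ R_μ = λ_s(X, μ)` and `R(Y_n, μ_n) → R_μ` as `n → ∞`. -/
theorem strong_critical_parameter_spatial_approximation
    {X : Type*} [Countable X] [DecidableEq X]
    (μ : X → X → ℝ≥0∞) (hbdd : bddRows μ) (hconn : connectedW μ)
    (S : ℕ → Set X) (hfin : ∀ n, (S n).Finite) (hmono : ∀ n, S n ⊆ S (n + 1))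
    (hcover : ⋃ n, S n = Set.univ)
    (hconnS : ∀ n, ∀ x ∈ S n, ∀ y ∈ S n,
      ∃ k, 0 < k ∧ 0 < matPow (restrictW μ (S n)) k x y)
    (T : ℕ → Set X) (ν : ℕ → X → X → ℝ≥0∞)
    (hST : ∀ n, S n ⊆ T n)
    (hsupp : ∀ n x y, ¬(x ∈ T n ∧ y ∈ T n) → ν n x y = 0)
    (hle : ∀ n x y, ν n x y ≤ μ x y)
    (hlim : ∀ x y, Tendsto (fun n => ν n x y) atTop (nhds (μ x y)))
    (hconnT : ∀ n, ∀ x ∈ T n, ∀ y ∈ T n, ∃ k, 0 < k ∧ 0 < matPow (ν n) k x y) :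
    (∀ n, ∀ x ∈ T n, ∀ y ∈ T n, convR μ x y ≤ convR (ν n) x y) ∧
    (∀ x y : X, Tendsto (fun n => convR (ν n) x y) atTop (nhds (convR μ x y))) := by
  simp only [convR]
  obtain ⟨K, hKt, hK⟩ := hbdd
  have hKν : ∀ n x, ∑' y, ν n x y ≤ K := fun n x =>
    le_trans (ENNReal.tsum_le_tsum fun y => hle n x y) (hK x)
  have hmonoPow : ∀ n k x y, matPow (ν n) k x y ≤ matPow μ k x y := fun n =>
    matPow_mono (hle n)
  have hlsle : ∀ n x y, lsRoot (ν n) x y ≤ lsRoot μ x y := by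
    intro n x y
    exact Filter.limsup_le_limsup (Filter.Eventually.of_forall fun k =>
      ENNReal.rpow_le_rpow (hmonoPow n k x y) (by positivity))
  refine ⟨fun n x _ y _ => ENNReal.inv_le_inv' (hlsle n x y), fun x y => ?_⟩
  have hSmono : Monotone S := monotone_nat_of_le_succ hmono
  -- Step A
  obtain ⟨q, hq0, hqpos⟩ := hconn y x
  have hp0 : (0 : ℝ≥0∞) < matPow μ 0 x x := by simp [matPow]
  have stepA : lsRoot μ x y ≤ lsRoot μ x x := lsRoot_transfer hKt hK hp0 hqpos
  -- Step B
  have stepB : lsRoot μ x x ≤ Filter.liminf (fun n => lsRoot (ν n) x x) Filter.atTop := by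
    apply Filter.limsup_le_of_le (by isBoundedDefault)
    filter_upwards [Filter.eventually_ge_atTop 1] with k hk
    have hkpos : (0 : ℝ) < (k : ℝ)⁻¹ := by
      have : (0 : ℝ) < (k : ℝ) := by exact_mod_cast hk
      positivity
    have h2 : (matPow μ k x x) ^ (k : ℝ)⁻¹
        ≤ (Filter.liminf (fun n => matPow (ν n) k x x) Filter.atTop) ^ (k : ℝ)⁻¹ :=
      ENNReal.rpow_le_rpow (liminf_matPow hlim k x x) hkpos.le
    have h3 : (Filter.liminf (fun n => matPow (ν n) k x x) Filter.atTop) ^ (k : ℝ)⁻¹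
        = Filter.liminf (fun n => (matPow (ν n) k x x) ^ (k : ℝ)⁻¹) Filter.atTop := by
      simpa using (ENNReal.orderIsoRpow ((k : ℝ)⁻¹) hkpos).liminf_apply
        (u := fun n => matPow (ν n) k x x)
    have h4 : Filter.liminf (fun n => (matPow (ν n) k x x) ^ (k : ℝ)⁻¹) Filter.atTop
        ≤ Filter.liminf (fun n => lsRoot (ν n) x x) Filter.atTop :=
      Filter.liminf_le_liminf (Filter.Eventually.of_forall fun n =>
        root_le_lsRoot (ν n) x (by omega))
    exact h2.trans (h3 ▸ h4)
  -- Step C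
  have stepC : Filter.liminf (fun n => lsRoot (ν n) x x) Filter.atTop
      ≤ Filter.liminf (fun n => lsRoot (ν n) x y) Filter.atTop := by
    have hxS : ∃ nx, x ∈ S nx := Set.mem_iUnion.1 (hcover ▸ Set.mem_univ x)
    have hyS : ∃ ny, y ∈ S ny := Set.mem_iUnion.1 (hcover ▸ Set.mem_univ y)
    obtain ⟨nx, hnx⟩ := hxS
    obtain ⟨ny, hny⟩ := hyS
    refine Filter.liminf_le_liminf ?_ (by isBoundedDefault) (by isBoundedDefault)
    filter_upwards [Filter.eventually_ge_atTop (max nx ny)] with n hn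
    have hxT : x ∈ T n := hST n (hSmono ((le_max_left nx ny).trans hn) hnx)
    have hyT : y ∈ T n := hST n (hSmono ((le_max_right nx ny).trans hn) hny)
    obtain ⟨qn, hqn0, hqnpos⟩ := hconnT n x hxT y hyT
    have hp0' : (0 : ℝ≥0∞) < matPow (ν n) 0 x x := by simp [matPow]
    exact lsRoot_transfer hKt (hKν n) hp0' hqnpos
  have hlow : lsRoot μ x y ≤ Filter.liminf (fun n => lsRoot (ν n) x y) Filter.atTop :=
    stepA.trans (stepB.trans stepC)
  have hup : Filter.limsup (fun n => lsRoot (ν n) x y) Filter.atTop ≤ lsRoot μ x y :=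
    Filter.limsup_le_of_le (by isBoundedDefault)
      (Filter.Eventually.of_forall fun n => hlsle n x y)
  exact Filter.Tendsto.inv (tendsto_of_le_liminf_of_limsup_le hlow hup)
end

section
/- Let (a_n)_{n≥0} be a nonnegative supermultiplicative sequence, i.e. a_{n+m} ≥ a_n a_m for all n,m ≥ 0, with a_1 > 0 and a_n ≤ M^n for some M > 0 (so that the limit L := lim_{n→∞} a_n^{1/n} exists and lies in (0,∞)). Let r ≥ 1 and k ≥ 0 be integers and let λ > 0 satisfy λ^r · L > 1. Then e^{−t} ∑_{i=0}^∞ a_i (λt)^{ir+k} / (ir+k)! tends to +∞ as t → +∞. -/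
open Filter

lemma aux_exp_inv (m : ℕ) (hm : 1 ≤ m) :
    Real.exp (1 / ((m:ℝ) + 1)) ≤ ((m:ℝ) + 1) / m := by
  have hm' : (1:ℝ) ≤ m := by exact_mod_cast hm
  have h1 : (0:ℝ) < m := by linarith
  have h2 : (0:ℝ) < (m:ℝ) + 1 := by linarith
  have key := Real.add_one_le_exp (-(1 / ((m:ℝ) + 1)))
  have h3 : (m:ℝ) / (m + 1) ≤ Real.exp (-(1 / ((m:ℝ) + 1))) := by
    have h : -(1 / ((m:ℝ) + 1)) + 1 = (m:ℝ)/(m+1) := by field_simp; ring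
    linarith [h ▸ key]
  rw [Real.exp_neg] at h3
  have hepos := Real.exp_pos (1 / ((m:ℝ) + 1))
  rw [le_inv_comm₀ (by positivity) hepos] at h3
  calc Real.exp (1 / ((m:ℝ) + 1)) ≤ ((m:ℝ)/(m+1))⁻¹ := h3
    _ = ((m:ℝ)+1)/m := by field_simp

lemma aux_e_le (m : ℕ) (hm : 1 ≤ m) :
    Real.exp 1 ≤ (((m:ℝ) + 1) / m) ^ (m + 1) := by
  have hm' : (1:ℝ) ≤ m := by exact_mod_cast hm
  have h1 : (0:ℝ) < m := by linarith
  have : Real.exp 1 = Real.exp (1 / ((m:ℝ)+1)) ^ (m+1) := by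
    rw [← Real.exp_nat_mul]
    congr 1
    push_cast
    field_simp
  rw [this]
  exact pow_le_pow_left₀ (Real.exp_pos _).le (aux_exp_inv m hm) _

lemma aux_exp_fact : ∀ m : ℕ, 1 ≤ m →
    Real.exp ((m:ℝ) - 1) * (Nat.factorial m : ℝ) ≤ (m:ℝ) ^ (m + 1) := by
  intro m hm
  induction m with
  | zero => omega
  | succ n ih =>
    rcases Nat.eq_or_lt_of_le hm with h | h
    · simp [← h]
    · have hn : 1 ≤ n := by omega
      have ihn := ih hn
      have hn' : (1:ℝ) ≤ n := by exact_mod_cast hn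
      have h1 : (0:ℝ) < n := by linarith
      have he := aux_e_le n hn
      have hfact : (Nat.factorial (n+1) : ℝ) = (n+1) * Nat.factorial n := by
        push_cast [Nat.factorial_succ]; ring
      push_cast
      push_cast at ihn
      rw [show ((n:ℝ) + 1 - 1) = (n:ℝ) - 1 + 1 by ring, Real.exp_add]
      have hpos : (0:ℝ) < (n:ℝ)+1 := by linarith
      have step1 : Real.exp ((n:ℝ)-1) * Real.exp 1 * ((Nat.factorial (n+1) : ℝ)) ≤
          Real.exp 1 * ((n:ℝ)+1) * ((n:ℝ)^(n+1)) := by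
        rw [hfact]
        have h := mul_le_mul_of_nonneg_left ihn (by positivity : (0:ℝ) ≤ Real.exp 1 * ((n:ℝ)+1))
        calc Real.exp ((n:ℝ)-1) * Real.exp 1 * (((n:ℝ)+1) * (Nat.factorial n : ℝ))
            = Real.exp 1 * ((n:ℝ)+1) * (Real.exp ((n:ℝ)-1) * (Nat.factorial n : ℝ)) := by ring
          _ ≤ Real.exp 1 * ((n:ℝ)+1) * ((n:ℝ)^(n+1)) := h
      have step2 : Real.exp 1 * ((n:ℝ)+1) * ((n:ℝ)^(n+1)) ≤ ((n:ℝ)+1)^(n+2) := by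
        have h2 := mul_le_mul_of_nonneg_right he
          (by positivity : (0:ℝ) ≤ ((n:ℝ)+1) * (n:ℝ)^(n+1))
        calc Real.exp 1 * ((n:ℝ)+1) * (n:ℝ)^(n+1)
            = Real.exp 1 * (((n:ℝ)+1) * (n:ℝ)^(n+1)) := by ring
          _ ≤ (((n:ℝ)+1)/n)^(n+1) * (((n:ℝ)+1) * (n:ℝ)^(n+1)) := h2
          _ = ((n:ℝ)+1)^(n+2) := by
              rw [div_pow]
              field_simp
              ring
      have hfc : (0:ℝ) ≤ (Nat.factorial (n+1) : ℝ) := by positivity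
      push_cast at step1 ⊢
      nlinarith [step1, step2]

/-- for a nonnegative supermultiplicative sequence `a` with `a 1 > 0`,
`a n ≤ M^n`, with `L = lim a_n^{1/n}` and `λ^r · L > 1`, the function
`t ↦ e^{-t} ∑_i a_i (λ t)^{ir+k} / (ir+k)!` tends to `+∞` as `t → +∞`. -/
theorem supermultiplicative_series_tendsto_atTop
    (a : ℕ → ℝ) (ha0 : ∀ n, 0 ≤ a n)
    (hsm : ∀ n m, a n * a m ≤ a (n + m))
    (ha1 : 0 < a 1)
    (M : ℝ) (hM : 0 < M) (hbd : ∀ n, a n ≤ M ^ n)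
    (L : ℝ) (hL : Tendsto (fun n : ℕ => a n ^ (n : ℝ)⁻¹) atTop (nhds L))
    (r k : ℕ) (hr : 1 ≤ r)
    (lam : ℝ) (hlam : 0 < lam) (hcrit : 1 < lam ^ r * L) :
    Tendsto
      (fun t : ℝ =>
        Real.exp (-t) *
          ∑' i : ℕ, a i * (lam * t) ^ (i * r + k) / (Nat.factorial (i * r + k) : ℝ))
      atTop atTop := by
  -- Step 1 : pick n₀ with 1 < lam^(n₀*r) * a n₀
  have hlr : (0:ℝ) < lam ^ r := by positivity
  have hgt : 1 / lam ^ r < L := by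
    rw [div_lt_iff₀ hlr]; linarith [hcrit, mul_comm (lam ^ r) L]
  obtain ⟨n₀, hn₀a, hn₀1⟩ :=
    ((hL.eventually (eventually_gt_nhds hgt)).and (eventually_ge_atTop 1)).exists
  have hn₀pos : 0 < n₀ := hn₀1
  have hbase : (1:ℝ) < lam ^ (n₀ * r) * a n₀ := by
    have h1 : ((1 / lam ^ r : ℝ)) ^ n₀ < (a n₀ ^ ((n₀:ℝ))⁻¹) ^ n₀ :=
      pow_lt_pow_left₀ hn₀a (by positivity) hn₀pos.ne'
    rw [Real.rpow_inv_natCast_pow (ha0 n₀) hn₀pos.ne'] at h1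
    rw [div_pow, one_pow, ← pow_mul, div_lt_iff₀ (by positivity)] at h1
    calc (1:ℝ) < a n₀ * lam ^ (r * n₀) := h1
      _ = lam ^ (n₀ * r) * a n₀ := by rw [mul_comm r n₀]; ring
  set c := a n₀ with hc_def
  set R := n₀ * r with hR_def
  have hR : 0 < R := Nat.mul_pos hn₀pos hr
  have hc : 0 < c := by
    by_contra h
    push_neg at h
    have : c = 0 := le_antisymm h (ha0 n₀)
    rw [this, mul_zero] at hbase; linarith
  -- μ and D
  set q : ℝ := c ^ ((R:ℝ)⁻¹) with hq_def
  have hq : 0 < q := Real.rpow_pos_of_pos hc _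
  set μ : ℝ := lam * q with hμ_def
  have hμpos : 0 < μ := mul_pos hlam hq
  have hqR : q ^ R = c := Real.rpow_inv_natCast_pow hc.le hR.ne'
  have hμR : 1 < μ ^ R := by
    rw [hμ_def, mul_pow, hqR]; exact hbase
  have hμ1 : 1 < μ := by
    by_contra h
    push_neg at h
    have h2 : μ ^ R ≤ 1 := pow_le_one₀ hμpos.le h
    linarith
  set D : ℝ := q ^ k with hD_def
  have hD : 0 < D := by positivity
  have hid : ∀ j : ℕ, μ ^ (j * R + k) = c ^ j * lam ^ (j * R + k) * D := by
    intro j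
    have hqm : q ^ (j * R + k) = c ^ j * D := by
      rw [pow_add, mul_comm j R, pow_mul, hqR]
    rw [hμ_def, mul_pow, hqm]; ring
  -- supermultiplicativity
  have hsup : ∀ j : ℕ, 1 ≤ j → c ^ j ≤ a (n₀ * j) := by
    intro j hj
    obtain ⟨j', rfl⟩ : ∃ j', j = j' + 1 := ⟨j - 1, by omega⟩
    clear hj
    induction j' with
    | zero => simp [hc_def]
    | succ i ih =>
      calc c ^ (i + 1 + 1) = c ^ (i + 1) * c := by ring
        _ ≤ a (n₀ * (i + 1)) * a n₀ := mul_le_mul ih le_rfl hc.le (ha0 _)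
        _ ≤ a (n₀ * (i + 1) + n₀) := hsm _ _
        _ = a (n₀ * (i + 1 + 1)) := by congr 1 <;> try ring
  -- summability
  have hsummable : ∀ t : ℝ, 0 ≤ t →
      Summable (fun i : ℕ => a i * (lam * t) ^ (i * r + k) / (Nat.factorial (i * r + k) : ℝ)) := by
    intro t ht
    set B := max M 1 with hB_def
    have hB1 : (1:ℝ) ≤ B := le_max_right _ _
    have hg : Summable (fun n : ℕ => (B * (lam * t)) ^ n / (Nat.factorial n : ℝ)) :=
      Real.summable_pow_div_factorial _
    have hinj : Function.Injective (fun i : ℕ => i * r + k) := by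
      intro i j h
      simp only [add_left_inj] at h
      exact Nat.eq_of_mul_eq_mul_right hr h
    have hcomp := hg.comp_injective hinj
    apply Summable.of_nonneg_of_le (fun i => by have := ha0 i; positivity) _ hcomp
    intro i
    simp only [Function.comp_apply]
    have hai : a i ≤ B ^ (i * r + k) := by
      calc a i ≤ M ^ i := hbd i
        _ ≤ B ^ i := pow_le_pow_left₀ hM.le (le_max_left _ _) i
        _ ≤ B ^ (i * r + k) := pow_le_pow_right₀ hB1 (by
            calc i = i * 1 := (mul_one i).symm
              _ ≤ i * r := Nat.mul_le_mul_left i hr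
              _ ≤ i * r + k := Nat.le_add_right _ _)
    rw [mul_pow B]
    gcongr
  -- the minorant
  set C : ℝ := Real.exp (-((R:ℝ) + 2)) / (D * μ) with hC_def
  have hCpos : 0 < C := by positivity
  have hgtend : Tendsto (fun t : ℝ => C * (Real.exp ((μ - 1) * t) / t)) atTop atTop := by
    have h1 : Tendsto (fun u : ℝ => Real.exp u / u) atTop atTop := by
      simpa using Real.tendsto_exp_div_pow_atTop 1
    have h2 : Tendsto (fun t : ℝ => (μ - 1) * t) atTop atTop :=
      Tendsto.const_mul_atTop (by linarith) tendsto_id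
    have h3 := (h1.comp h2).const_mul_atTop (show (0:ℝ) < μ - 1 by linarith)
    have h4 : Tendsto (fun t : ℝ => Real.exp ((μ - 1) * t) / t) atTop atTop := by
      apply h3.congr'
      filter_upwards [eventually_ne_atTop (0:ℝ)] with t ht
      simp only [Function.comp_apply]
      rw [mul_div_assoc']
      rw [mul_div_mul_left _ _ (show (μ:ℝ) - 1 ≠ 0 by linarith)]
    exact h4.const_mul_atTop hCpos
  apply tendsto_atTop_mono' atTop _ hgtend
  -- eventual lower bound
  have hev1 : ∀ᶠ t : ℝ in atTop, (1:ℝ) ≤ t := eventually_ge_atTop 1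
  have hev2 : ∀ᶠ t : ℝ in atTop, ((k:ℝ) + R + 1) ≤ μ * t := by
    have := Tendsto.const_mul_atTop hμpos (tendsto_id (α := ℝ))
    exact this.eventually_ge_atTop _
  filter_upwards [hev1, hev2] with t ht1 ht2
  have ht0 : (0:ℝ) < t := by linarith
  have hμt : (0:ℝ) < μ * t := by positivity
  set N := ⌊μ * t⌋₊ with hN_def
  have hNle : (N:ℝ) ≤ μ * t := Nat.floor_le hμt.le
  have hNgt : μ * t < N + 1 := Nat.lt_floor_add_one _
  have hNk : k + R ≤ N := by
    have : ((k + R : ℕ) : ℝ) ≤ μ * t := by push_cast; linarith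
    exact Nat.le_floor this
  set j := (N - k) / R with hj_def
  set m := j * R + k with hm_def
  have hjR : j * R ≤ N - k := Nat.div_mul_le_self _ _
  have hj1 : 1 ≤ j := by
    rw [hj_def, Nat.le_div_iff_mul_le hR]; omega
  have hmN : m ≤ N := by rw [hm_def]; omega
  have hjR2 : N - k < j * R + R := by
    by_contra hcon
    push_neg at hcon
    have h2 : (j + 1) * R ≤ N - k := by
      calc (j + 1) * R = j * R + R := by ring
        _ ≤ N - k := hcon
    have h3 : j + 1 ≤ (N - k) / R := (Nat.le_div_iff_mul_le hR).mpr h2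
    rw [← hj_def] at h3
    omega
  have hNm : N < m + R := by rw [hm_def]; omega
  have hm1 : 1 ≤ m := by
    have : R ≤ j * R := Nat.le_mul_of_pos_left R hj1
    omega
  have hmreal : (m:ℝ) ≤ μ * t := le_trans (by exact_mod_cast hmN) hNle
  have hmlow : μ * t - (R:ℝ) - 1 < m := by
    have : (N:ℝ) < m + R := by exact_mod_cast hNm
    linarith
  set i₀ := n₀ * j with hi₀_def
  have hi₀m : i₀ * r + k = m := by
    rw [hi₀_def, hm_def, hR_def]; ring_nf
  -- lower bound by single term
  have hterm : a i₀ * (lam * t) ^ m / (Nat.factorial m : ℝ) ≤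
      ∑' i : ℕ, a i * (lam * t) ^ (i * r + k) / (Nat.factorial (i * r + k) : ℝ) := by
    have := Summable.le_tsum (hsummable t ht0.le) i₀ (fun i _ => by have := ha0 i; positivity)
    rwa [hi₀m] at this
  have hmpos : (0:ℝ) < m := by
    have h0 : 0 < m := hm1
    exact_mod_cast h0
  have hfactpos : (0:ℝ) < (Nat.factorial m : ℝ) := by
    exact_mod_cast Nat.factorial_pos m
  -- chain of bounds
  have hA : (μ * t) ^ m / D ≤ a i₀ * (lam * t) ^ m := by
    have h1 : (μ * t) ^ m / D = c ^ j * (lam * t) ^ m := by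
      rw [mul_pow, hid j, mul_pow lam t]
      field_simp
      ring
    rw [h1]
    apply mul_le_mul_of_nonneg_right (hsup j hj1) (by positivity)
  have hB2 : Real.exp (μ * t - ((R:ℝ) + 2)) / (μ * t) ≤ (μ * t) ^ m / (Nat.factorial m : ℝ) := by
    have hs1 : Real.exp (μ * t - ((R:ℝ) + 2)) ≤ Real.exp ((m:ℝ) - 1) :=
      Real.exp_le_exp.mpr (by linarith)
    have hs2 : Real.exp ((m:ℝ) - 1) / (m:ℝ) ≤ (m:ℝ) ^ m / (Nat.factorial m : ℝ) := by
      rw [div_le_div_iff₀ hmpos hfactpos]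
      have := aux_exp_fact m hm1
      calc Real.exp ((m:ℝ) - 1) * (Nat.factorial m : ℝ) ≤ (m:ℝ) ^ (m + 1) := this
        _ = (m:ℝ) ^ m * m := by ring
    have hs3 : ((m:ℝ)) ^ m ≤ (μ * t) ^ m := pow_le_pow_left₀ (by positivity) hmreal m
    calc Real.exp (μ * t - ((R:ℝ) + 2)) / (μ * t)
        ≤ Real.exp ((m:ℝ) - 1) / (m:ℝ) := by gcongr
      _ ≤ (m:ℝ) ^ m / (Nat.factorial m : ℝ) := hs2
      _ ≤ (μ * t) ^ m / (Nat.factorial m : ℝ) := by gcongr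
  -- put it together
  have hfinal : C * (Real.exp ((μ - 1) * t) / t) ≤
      Real.exp (-t) * (a i₀ * (lam * t) ^ m / (Nat.factorial m : ℝ)) := by
    have ha1' : C * (Real.exp ((μ - 1) * t) / t) =
        Real.exp ((μ - 1) * t - ((R:ℝ) + 2)) / (D * μ * t) := by
      rw [hC_def, show (μ - 1) * t - ((R:ℝ) + 2) = -((R:ℝ) + 2) + (μ - 1) * t by ring,
        Real.exp_add]
      field_simp
      try ring
    have ha2' : Real.exp (-t) * (Real.exp (μ * t - ((R:ℝ) + 2)) / (μ * t) / D) =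
        Real.exp ((μ - 1) * t - ((R:ℝ) + 2)) / (D * μ * t) := by
      rw [show (μ - 1) * t - ((R:ℝ) + 2) = -t + (μ * t - ((R:ℝ) + 2)) by ring, Real.exp_add]
      field_simp
      try ring
    rw [ha1'.trans ha2'.symm]
    apply mul_le_mul_of_nonneg_left _ (Real.exp_pos (-t)).le
    calc Real.exp (μ * t - ((R:ℝ) + 2)) / (μ * t) / D
        ≤ (μ * t) ^ m / (Nat.factorial m : ℝ) / D := by gcongr
      _ = (μ * t) ^ m / D / (Nat.factorial m : ℝ) := by ring
      _ ≤ a i₀ * (lam * t) ^ m / (Nat.factorial m : ℝ) := by gcongr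
  calc C * (Real.exp ((μ - 1) * t) / t)
      ≤ Real.exp (-t) * (a i₀ * (lam * t) ^ m / (Nat.factorial m : ℝ)) := hfinal
    _ ≤ Real.exp (-t) *
        ∑' i : ℕ, a i * (lam * t) ^ (i * r + k) / (Nat.factorial (i * r + k) : ℝ) := by
        apply mul_le_mul_of_nonneg_left hterm (Real.exp_pos (-t)).le
end

section
/- Let (X,μ) and (I,ν) be weighted graphs with bounded row sums, and let f : X → I be a local isomorphism, i.e. ∑_{z ∈ f^{-1}(i)} μ(x,z) = ν(f(x), i) for all x ∈ X and i ∈ I. Then for every n ≥ 0, every x ∈ X and every i ∈ I, ∑_{z ∈ f^{-1}(i)} μ^{(n)}(x,z) = ν^{(n)}(f(x), i). -/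
open Filter MeasureTheory ProbabilityTheory
open scoped ENNReal NNReal

/-- `f : X → I` is a local isomorphism of `(X, μ)` on `(I, ν)`:
`∑_{z ∈ f⁻¹(i)} μ(x, z) = ν(f x, i)` for all `x, i`. -/
def IsLocalIsom {X I : Type*} (μ : X → X → ℝ≥0∞) (ν : I → I → ℝ≥0∞) (f : X → I) : Prop :=
  ∀ (x : X) (i : I), ∑' z : {z : X // f z = i}, μ x z.1 = ν (f x) i

/-- a local isomorphism projects all matrix powers:
`∑_{z ∈ f⁻¹(i)} μ^{(n)}(x, z) = ν^{(n)}(f x, i)`. -/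
theorem localIsom_matPow
    {X I : Type*} [Countable X] [DecidableEq X] [Countable I] [DecidableEq I]
    (μ : X → X → ℝ≥0∞) (ν : I → I → ℝ≥0∞)
    (hμ : bddRows μ) (hν : bddRows ν)
    (f : X → I) (hf : IsLocalIsom μ ν f) :
    ∀ (n : ℕ) (x : X) (i : I),
      ∑' z : {z : X // f z = i}, matPow μ n x z.1 = matPow ν n (f x) i := by
  intro n
  induction n with
  | zero =>
    intro x i
    simp only [matPow]
    by_cases h : f x = i
    · subst h
      rw [if_pos rfl]
      rw [tsum_eq_single (⟨x, rfl⟩ : {z : X // f z = f x})]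
      · simp
      · intro b hb
        rw [if_neg]
        intro hxb
        exact hb (Subtype.ext hxb.symm)
    · rw [if_neg h]
      convert tsum_zero with z
      rw [if_neg]
      intro hxz
      exact h (hxz ▸ z.2)
  | succ n ih =>
    intro x i
    simp only [matPow]
    calc ∑' z : {z : X // f z = i}, ∑' w, matPow μ n x w * μ w z.1
        = ∑' w, ∑' z : {z : X // f z = i}, matPow μ n x w * μ w z.1 :=
          ENNReal.tsum_comm
      _ = ∑' w, matPow μ n x w * ν (f w) i := by
          congr 1; funext w
          rw [ENNReal.tsum_mul_left, hf w i]
      _ = ∑' p : (Σ j : I, {w : X // f w = j}), matPow μ n x p.2.1 * ν p.1 i := by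
          rw [← (Equiv.sigmaFiberEquiv f).tsum_eq]
          congr 1; funext p
          obtain ⟨j, w, hw⟩ := p
          simp [Equiv.sigmaFiberEquiv, hw]
      _ = ∑' j : I, ∑' w : {w : X // f w = j}, matPow μ n x w.1 * ν j i :=
          ENNReal.tsum_sigma fun j (w : {w : X // f w = j}) => matPow μ n x w.1 * ν j i
      _ = ∑' j : I, matPow ν n (f x) j * ν j i := by
          congr 1; funext j
          rw [ENNReal.tsum_mul_right, ih x j]
end

section
/- Let p, q > 0 with p + q ≤ 1, and let P be the random walk kernel on ℤ given by p(i,i+1) = p, p(i,i−1) = q, p(i,i) = 1 − p − q, and p(i,j) = 0 if |i − j| > 1. Then for all natural numbers a, b, c with a + b + c = n, the n-step transition probabilities satisfy p^{(n)}(0, a − b) ≥ (n! / (a! b! c!)) · p^a · q^b · (1 − p − q)^c. -/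
open Filter MeasureTheory ProbabilityTheory
open scoped ENNReal NNReal

/-- The random walk kernel on `ℤ` stepping `+1` with probability `p`, `-1` with
probability `q` and staying put with probability `1 - p - q`. -/
noncomputable def driftKernel (p q : ℝ) : ℤ → ℤ → ℝ≥0∞ := fun i j =>
  if j = i + 1 then ENNReal.ofReal p
  else if j = i - 1 then ENNReal.ofReal q
  else if j = i then ENNReal.ofReal (1 - p - q)
  else 0

private lemma matPow_step_ge (μ : ℤ → ℤ → ℝ≥0∞) (n : ℕ) (y : ℤ) :
    matPow μ n 0 (y - 1) * μ (y - 1) y + matPow μ n 0 (y + 1) * μ (y + 1) y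
      + matPow μ n 0 y * μ y y ≤ matPow μ (n + 1) 0 y := by
  have h := ENNReal.sum_le_tsum (s := ({y - 1, y + 1, y} : Finset ℤ))
      (f := fun z => matPow μ n 0 z * μ z y)
  rw [show matPow μ (n + 1) 0 y = ∑' z, matPow μ n 0 z * μ z y from rfl]
  refine le_trans (le_of_eq ?_) h
  rw [Finset.sum_insert (by simp; omega), Finset.sum_insert (by simp),
    Finset.sum_singleton]
  ring

/-- multinomial lower bound for the `n`-step transition probabilities of
the drifting random walk on `ℤ`: for `a + b + c = n`,
`p^{(n)}(0, a - b) ≥ n!/(a! b! c!) · p^a q^b (1-p-q)^c`. -/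
theorem driftKernel_multinomial_lower_bound
    (p q : ℝ) (hp : 0 < p) (hq : 0 < q) (hpq : p + q ≤ 1) :
    ∀ (n a b c : ℕ), a + b + c = n →
      ENNReal.ofReal
          ((Nat.factorial n : ℝ) /
              (Nat.factorial a * Nat.factorial b * Nat.factorial c) *
            p ^ a * q ^ b * (1 - p - q) ^ c) ≤
        matPow (driftKernel p q) n 0 ((a : ℤ) - (b : ℤ)) := by
  have hr : 0 ≤ 1 - p - q := by linarith
  intro n
  induction n with
  | zero =>
    intro a b c h
    obtain ⟨rfl, rfl, rfl⟩ : a = 0 ∧ b = 0 ∧ c = 0 := by omega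
    simp [matPow, Nat.factorial]
  | succ n ih =>
    intro a b c h
    set y : ℤ := (a : ℤ) - (b : ℤ) with hy
    have hk1 : driftKernel p q (y - 1) y = ENNReal.ofReal p := by
      simp [driftKernel]
    have hk2 : driftKernel p q (y + 1) y = ENNReal.ofReal q := by
      simp only [driftKernel]
      rw [if_neg (by omega), if_pos (by ring)]
    have hk3 : driftKernel p q y y = ENNReal.ofReal (1 - p - q) := by
      simp only [driftKernel]
      rw [if_neg (by omega), if_neg (by omega)]
      simp
    set M : ℝ := (Nat.factorial (n + 1) : ℝ) /
        (Nat.factorial a * Nat.factorial b * Nat.factorial c) *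
        p ^ a * q ^ b * (1 - p - q) ^ c with hM
    have hMnonneg : 0 ≤ M := by positivity
    have hcast : (a : ℝ) + b + c = (n : ℝ) + 1 := by exact_mod_cast congrArg Nat.cast h
    have hsplit : M = (a : ℝ) / (n + 1) * M + (b : ℝ) / (n + 1) * M
        + (c : ℝ) / (n + 1) * M := by
      have hn : (n : ℝ) + 1 ≠ 0 := by positivity
      field_simp
      nlinarith [hcast]
    -- term a
    have hTa : ENNReal.ofReal ((a : ℝ) / (n + 1) * M) ≤
        matPow (driftKernel p q) n 0 (y - 1) * ENNReal.ofReal p := by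
      cases a with
      | zero => simp
      | succ a' =>
        have hy1 : y - 1 = (a' : ℤ) - (b : ℤ) := by push_cast [hy]; ring
        have heq : (((a' : ℕ) + 1 : ℕ) : ℝ) / (n + 1) * M =
            ((Nat.factorial n : ℝ) /
              (Nat.factorial a' * Nat.factorial b * Nat.factorial c) *
              p ^ a' * q ^ b * (1 - p - q) ^ c) * p := by
          rw [hM, Nat.factorial_succ (a'), Nat.factorial_succ n]
          have h1 : (Nat.factorial a' : ℝ) ≠ 0 := by positivity
          have h2 : (Nat.factorial b : ℝ) ≠ 0 := by positivity
          have h3 : (Nat.factorial c : ℝ) ≠ 0 := by positivity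
          have h4 : (n : ℝ) + 1 ≠ 0 := by positivity
          have h5 : (a' : ℝ) + 1 ≠ 0 := by positivity
          push_cast
          field_simp
          ring
        rw [heq, ENNReal.ofReal_mul (by positivity), hy1]
        exact mul_le_mul_left (ih a' b c (by omega)) _
    -- term b
    have hTb : ENNReal.ofReal ((b : ℝ) / (n + 1) * M) ≤
        matPow (driftKernel p q) n 0 (y + 1) * ENNReal.ofReal q := by
      cases b with
      | zero => simp
      | succ b' =>
        have hy1 : y + 1 = (a : ℤ) - (b' : ℤ) := by push_cast [hy]; ring
        have heq : (((b' : ℕ) + 1 : ℕ) : ℝ) / (n + 1) * M =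
            ((Nat.factorial n : ℝ) /
              (Nat.factorial a * Nat.factorial b' * Nat.factorial c) *
              p ^ a * q ^ b' * (1 - p - q) ^ c) * q := by
          rw [hM, Nat.factorial_succ (b'), Nat.factorial_succ n]
          have h1 : (Nat.factorial a : ℝ) ≠ 0 := by positivity
          have h2 : (Nat.factorial b' : ℝ) ≠ 0 := by positivity
          have h3 : (Nat.factorial c : ℝ) ≠ 0 := by positivity
          have h4 : (n : ℝ) + 1 ≠ 0 := by positivity
          have h5 : (b' : ℝ) + 1 ≠ 0 := by positivity
          push_cast
          field_simp
          ring
        rw [heq, ENNReal.ofReal_mul (by positivity), hy1]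
        exact mul_le_mul_left (ih a b' c (by omega)) _
    -- term c
    have hTc : ENNReal.ofReal ((c : ℝ) / (n + 1) * M) ≤
        matPow (driftKernel p q) n 0 y * ENNReal.ofReal (1 - p - q) := by
      cases c with
      | zero => simp
      | succ c' =>
        have heq : (((c' : ℕ) + 1 : ℕ) : ℝ) / (n + 1) * M =
            ((Nat.factorial n : ℝ) /
              (Nat.factorial a * Nat.factorial b * Nat.factorial c') *
              p ^ a * q ^ b * (1 - p - q) ^ c') * (1 - p - q) := by
          rw [hM, Nat.factorial_succ (c'), Nat.factorial_succ n]
          have h1 : (Nat.factorial a : ℝ) ≠ 0 := by positivity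
          have h2 : (Nat.factorial b : ℝ) ≠ 0 := by positivity
          have h3 : (Nat.factorial c' : ℝ) ≠ 0 := by positivity
          have h4 : (n : ℝ) + 1 ≠ 0 := by positivity
          have h5 : (c' : ℝ) + 1 ≠ 0 := by positivity
          push_cast
          field_simp
          ring
        rw [heq, ENNReal.ofReal_mul (by positivity)]
        exact mul_le_mul_left (ih a b c' (by omega)) _
    calc ENNReal.ofReal M
        = ENNReal.ofReal ((a : ℝ) / (n + 1) * M) +
          ENNReal.ofReal ((b : ℝ) / (n + 1) * M) +
          ENNReal.ofReal ((c : ℝ) / (n + 1) * M) := by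
          rw [← ENNReal.ofReal_add (by positivity) (by positivity),
            ← ENNReal.ofReal_add (by positivity) (by positivity), ← hsplit]
      _ ≤ matPow (driftKernel p q) n 0 (y - 1) * driftKernel p q (y - 1) y +
          matPow (driftKernel p q) n 0 (y + 1) * driftKernel p q (y + 1) y +
          matPow (driftKernel p q) n 0 y * driftKernel p q y y := by
          rw [hk1, hk2, hk3]
          exact add_le_add (add_le_add hTa hTb) hTc
      _ ≤ matPow (driftKernel p q) (n + 1) 0 y := matPow_step_ge _ _ _
end
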